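/- arXiv:1911.08727 — 3 statements merged into one kernel-verified Lean document; each statement's English description precedes it below -/
import Mathlib

section
/- For every vector x ∈ ℝ^d and every integer k with 1 ≤ k ≤ d, the Top-k sparsification error satisfies ‖x − TopK(x,k)‖² ≤ (1 − k/d) ‖x‖²; that is, keeping the k coordinates of largest absolute value incurs squared error no larger than the average squared error over all choices of k coordinates to keep. -/
open Finset

/-- `topK k y ∈ ℝ^m` keeps the `k` coordinates of `y` with largest absolute value
(ties broken by preferring the smaller index) and sets the other coordinates to zero.
A coordinate `i` is kept iff fewer than `k` coordinates `j` strictly precede it in the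
order "larger absolute value, ties broken by smaller index". -/
noncomputable def topK {m : ℕ} (k : ℕ) (y : EuclideanSpace ℝ (Fin m)) :
    EuclideanSpace ℝ (Fin m) :=
  WithLp.toLp 2 fun i => if (Finset.univ.filter
      (fun j => |y i| < |y j| ∨ (|y i| = |y j| ∧ j < i))).card < k then y i else 0

/-- For every `x ∈ ℝ^d` and `1 ≤ k ≤ d`, the Top-`k` sparsification error satisfies
`‖x − TopK(x,k)‖² ≤ (1 − k/d) ‖x‖²`. -/
theorem topK_squared_error_le (d k : ℕ) (hk1 : 1 ≤ k) (hkd : k ≤ d)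
    (x : EuclideanSpace ℝ (Fin d)) :
    ‖x - topK k x‖ ^ 2 ≤ (1 - (k : ℝ) / d) * ‖x‖ ^ 2 := by
  classical
  -- the strict total order: larger absolute value first, ties by smaller index
  set f : Fin d → ℝ ×ₗ (Fin d) := fun i => toLex (-|x i|, i) with hf
  have hflt : ∀ i j : Fin d, f j < f i ↔ (|x i| < |x j| ∨ (|x i| = |x j| ∧ j < i)) := by
    intro i j
    rw [hf]
    rw [Prod.Lex.lt_iff]
    simp only [ofLex_toLex, neg_lt_neg_iff, neg_inj]
    constructor
    · rintro (h | ⟨h1, h2⟩)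
      · exact Or.inl h
      · exact Or.inr ⟨h1.symm, h2⟩
    · rintro (h | ⟨h1, h2⟩)
      · exact Or.inl h
      · exact Or.inr ⟨h1.symm, h2⟩
  have hfinj : Function.Injective f := by
    intro a b h
    have := congrArg (fun p => (ofLex p).2) h
    simpa [hf] using this
  set rank : Fin d → ℕ := fun i => (univ.filter (fun j => f j < f i)).card with hrank
  have hrank_lt : ∀ i, rank i < d := by
    intro i
    have h1 : (univ.filter (fun j => f j < f i)) ⊂ univ := by
      rw [Finset.ssubset_univ_iff]
      intro h
      have : i ∈ univ.filter (fun j => f j < f i) := by rw [h]; exact mem_univ i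
      simp at this
    simpa using Finset.card_lt_card h1
  have hrank_mono : ∀ a b, f a < f b → rank a < rank b := by
    intro a b h
    have hsub : insert a (univ.filter (fun j => f j < f a)) ⊆
        univ.filter (fun j => f j < f b) := by
      intro j hj
      rcases Finset.mem_insert.mp hj with rfl | hj
      · simp [h]
      · simp only [mem_filter, mem_univ, true_and] at hj ⊢
        exact hj.trans h
    have hnm : a ∉ univ.filter (fun j => f j < f a) := by simp
    have := Finset.card_le_card hsub
    rw [Finset.card_insert_of_notMem hnm] at this
    exact this
  have hrank_inj : Function.Injective rank := by
    intro a b hab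
    rcases lt_trichotomy (f a) (f b) with h | h | h
    · exact absurd hab (by have := hrank_mono a b h; omega)
    · exact hfinj h
    · exact absurd hab (by have := hrank_mono b a h; omega)
  set g : Fin d → Fin d := fun i => ⟨rank i, hrank_lt i⟩ with hg
  have hginj : Function.Injective g := by
    intro a b hab
    exact hrank_inj (congrArg Fin.val hab)
  have hgsurj : Function.Surjective g := Finite.surjective_of_injective hginj
  set S : Finset (Fin d) := univ.filter (fun i => rank i < k) with hS
  set T : Finset (Fin d) := univ.filter (fun i => ¬ rank i < k) with hT
  -- card of {m : Fin d | m.val < k} is k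
  have hcardfk : (univ.filter (fun m : Fin d => (m : ℕ) < k)).card = k := by
    have he : (univ.filter (fun m : Fin d => (m : ℕ) < k)) =
        Finset.map (Fin.castLEEmb hkd) univ := by
      ext m
      simp only [mem_filter, mem_univ, true_and, Finset.mem_map, Fin.castLEEmb,
        Function.Embedding.coeFn_mk]
      constructor
      · intro hm
        exact ⟨⟨m, hm⟩, by simp [Fin.castLE]⟩
      · rintro ⟨i, rfl⟩
        exact i.isLt
    rw [he, Finset.card_map, Finset.card_univ, Fintype.card_fin]
  have hScard : k ≤ S.card := by
    have hsub : (univ.filter (fun m : Fin d => (m : ℕ) < k)) ⊆ S.image g := by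
      intro m hm
      simp only [mem_filter, mem_univ, true_and] at hm
      obtain ⟨i, hi⟩ := hgsurj m
      refine Finset.mem_image.mpr ⟨i, ?_, hi⟩
      rw [hS, mem_filter]
      refine ⟨mem_univ i, ?_⟩
      have : rank i = (m : ℕ) := congrArg Fin.val hi
      omega
    calc k = (univ.filter (fun m : Fin d => (m : ℕ) < k)).card := hcardfk.symm
      _ ≤ (S.image g).card := Finset.card_le_card hsub
      _ ≤ S.card := Finset.card_image_le
  have hST : S.card + T.card = d := by
    have := Finset.card_filter_add_card_filter_not
      (s := (univ : Finset (Fin d))) (p := fun i => rank i < k)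
    simpa [hS, hT] using this
  have hTcard : T.card ≤ d - k := by omega
  -- comparison of coordinates
  have hcomp : ∀ a ∈ T, ∀ b ∈ S, (x a) ^ 2 ≤ (x b) ^ 2 := by
    intro a ha b hb
    rw [hT, mem_filter] at ha
    rw [hS, mem_filter] at hb
    have habs : |x a| ≤ |x b| := by
      by_contra hc
      push_neg at hc
      have hlt : f a < f b := (hflt b a).mpr (Or.inl hc)
      have h2 := hrank_mono a b hlt
      have h3 := ha.2
      have h4 := hb.2
      omega
    calc (x a) ^ 2 = |x a| ^ 2 := (sq_abs _).symm
      _ ≤ |x b| ^ 2 := by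
          exact pow_le_pow_left₀ (abs_nonneg _) habs 2
      _ = (x b) ^ 2 := sq_abs _
  -- norms as sums of squares
  have hnorm2 : ∀ y : EuclideanSpace ℝ (Fin d), ‖y‖ ^ 2 = ∑ i, (y i) ^ 2 := by
    intro y
    rw [EuclideanSpace.norm_eq, Real.sq_sqrt (by positivity)]
    simp [Real.norm_eq_abs, sq_abs]
  have htop : ∀ i, topK k x i = if rank i < k then x i else 0 := by
    intro i
    have hfe : (univ.filter (fun j => |x i| < |x j| ∨ (|x i| = |x j| ∧ j < i))) =
        univ.filter (fun j => f j < f i) := by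
      ext j
      simp [hflt i j]
    rw [topK, PiLp.toLp_apply, hfe]
  have happly : ∀ i, (x - topK k x) i = x i - topK k x i := fun i => rfl
  set A : ℝ := ∑ i ∈ S, (x i) ^ 2 with hA
  set B : ℝ := ∑ i ∈ T, (x i) ^ 2 with hB
  have hA0 : 0 ≤ A := Finset.sum_nonneg (fun i _ => sq_nonneg _)
  have hB0 : 0 ≤ B := Finset.sum_nonneg (fun i _ => sq_nonneg _)
  have hxsum : ‖x‖ ^ 2 = A + B := by
    rw [hnorm2 x, ← Finset.sum_filter_add_sum_filter_not univ (fun i => rank i < k)]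
  have herr : ‖x - topK k x‖ ^ 2 = B := by
    rw [hnorm2, ← Finset.sum_filter_add_sum_filter_not univ (fun i => rank i < k)]
    have h1 : ∑ i ∈ S, ((x - topK k x) i) ^ 2 = 0 := by
      apply Finset.sum_eq_zero
      intro i hi
      rw [hS, mem_filter] at hi
      rw [happly, htop, if_pos hi.2]
      ring
    have h2 : ∑ i ∈ T, ((x - topK k x) i) ^ 2 = B := by
      apply Finset.sum_congr rfl
      intro i hi
      rw [hT, mem_filter] at hi
      rw [happly, htop, if_neg hi.2]
      ring
    rw [hS] at h1
    rw [hT] at h2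
    rw [h1, h2, zero_add]
  -- key inequality
  have key : (S.card : ℝ) * B ≤ (T.card : ℝ) * A := by
    have l1 : ∑ a ∈ T, ∑ _b ∈ S, (x a) ^ 2 = (S.card : ℝ) * B := by
      rw [hB, Finset.mul_sum]
      apply Finset.sum_congr rfl
      intro a _
      rw [Finset.sum_const, nsmul_eq_mul]
    have l2 : ∑ _a ∈ T, ∑ b ∈ S, (x b) ^ 2 = (T.card : ℝ) * A := by
      rw [Finset.sum_const, nsmul_eq_mul]
    rw [← l1, ← l2]
    apply Finset.sum_le_sum
    intro a ha
    apply Finset.sum_le_sum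
    intro b hb
    exact hcomp a ha b hb
  have key2 : (k : ℝ) * B ≤ ((d : ℝ) - k) * A := by
    have h1 : (k : ℝ) * B ≤ (S.card : ℝ) * B :=
      mul_le_mul_of_nonneg_right (by exact_mod_cast hScard) hB0
    have h2 : (T.card : ℝ) * A ≤ ((d : ℝ) - k) * A := by
      have hc : (T.card : ℝ) ≤ (d : ℝ) - k := by
        have : ((T.card : ℕ) : ℝ) ≤ (((d - k : ℕ)) : ℝ) := by exact_mod_cast hTcard
        rwa [Nat.cast_sub hkd] at this
      exact mul_le_mul_of_nonneg_right hc hA0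
    linarith
  have hd0 : (0 : ℝ) < d := by
    have : 0 < d := by omega
    exact_mod_cast this
  rw [herr, hxsum]
  have hrw : (1 - (k : ℝ) / d) * (A + B) = ((d : ℝ) - k) * (A + B) / d := by
    field_simp
  rw [hrw, le_div_iff₀ hd0]
  nlinarith [key2, hA0, hB0]
end

section
/- Consider one step of LAGS-SGD at iteration t: with acc_{t+1}^{p,(l)} = ε_t^{p,(l)} + α_t G^p(v_t)^{(l)}, ε_{t+1}^{p,(l)} = acc_{t+1}^{p,(l)} − TopK(acc_{t+1}^{p,(l)}, k^{(l)}), v_{t+1}^{(l)} = v_t^{(l)} − (1/P) Σ_p TopK(acc_{t+1}^{p,(l)}, k^{(l)}), the auxiliary update x_{t+1} = x_t − α_t G(v_t) with G(v_t) = (1/P) Σ_p G^p(v_t), and v_t − x_t = (1/P) Σ_p ε_t^p. If for each layer l the aggregated Top-k error bound ‖Σ_p acc_{t+1}^{p,(l)} − Σ_p TopK(acc_{t+1}^{p,(l)}, k^{(l)})‖² ≤ (1 − k^{(l)}/d^{(l)}) ‖Σ_p acc_{t+1}^{p,(l)}‖² holds, then ‖v_{t+1} − x_{t+1}‖² ≤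 (1 − 1/c_max) ‖α_t G(v_t) + (v_t − x_t)‖². -/
/-- **One step of LAGS-SGD.**  The model space `ℝ^d` is partitioned into `L` layers of
sizes `d^{(l)}` and modelled as the `ℓ²`-product `PiLp 2` of the layer spaces.
With `acc^{p,(l)} = ε_t^{p,(l)} + α_t G^p(v_t)^{(l)}`,
`ε_{t+1}^{p,(l)} = acc^{p,(l)} − TopK(acc^{p,(l)}, k^{(l)})`,
`v_{t+1}^{(l)} = v_t^{(l)} − (1/P) Σ_p TopK(acc^{p,(l)}, k^{(l)})`,
`x_{t+1} = x_t − α_t G(v_t)` where `G(v_t) = (1/P) Σ_p G^p(v_t)` and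
`v_t − x_t = (1/P) Σ_p ε_t^p`, if each layer satisfies the aggregated Top-k error bound
`‖Σ_p acc^{p,(l)} − Σ_p TopK(acc^{p,(l)}, k^{(l)})‖² ≤ (1 − k^{(l)}/d^{(l)}) ‖Σ_p acc^{p,(l)}‖²`,
then `‖v_{t+1} − x_{t+1}‖² ≤ (1 − 1/c_max) ‖α_t G(v_t) + (v_t − x_t)‖²`. -/
theorem lags_one_step_contraction (L P : ℕ) (hL : 0 < L) (hP : 0 < P)
    (dl kl : Fin L → ℕ) (hk : ∀ l, 0 < kl l) (hkd : ∀ l, kl l ≤ dl l)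
    (cmax : ℝ)
    (hcmax : cmax = Finset.univ.sup' (Finset.univ_nonempty_iff.mpr ⟨⟨0, hL⟩⟩)
      fun l => (dl l : ℝ) / kl l)
    (α : ℝ) (hα : 0 < α)
    -- residuals `ε_t^p`, stochastic gradients `G^p(v_t)`, iterates `v_t`, `x_t`
    (ε G : Fin P → PiLp 2 (fun l : Fin L => EuclideanSpace ℝ (Fin (dl l))))
    (v x : PiLp 2 (fun l : Fin L => EuclideanSpace ℝ (Fin (dl l))))
    (hvx : v - x = (P : ℝ)⁻¹ • ∑ p, ε p)
    -- accumulated vectors `acc_{t+1}^p = ε_t^p + α_t G^p(v_t)`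
    (acc : Fin P → PiLp 2 (fun l : Fin L => EuclideanSpace ℝ (Fin (dl l))))
    (hacc : ∀ p, acc p = ε p + α • G p)
    -- new residuals `ε_{t+1}^{p,(l)} = acc^{p,(l)} − TopK(acc^{p,(l)}, k^{(l)})`
    (εnext : Fin P → PiLp 2 (fun l : Fin L => EuclideanSpace ℝ (Fin (dl l))))
    (hεnext : ∀ p l, εnext p l = acc p l - topK (kl l) (acc p l))
    -- average gradient `G(v_t) = (1/P) Σ_p G^p(v_t)`
    (Gbar : PiLp 2 (fun l : Fin L => EuclideanSpace ℝ (Fin (dl l))))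
    (hGbar : Gbar = (P : ℝ)⁻¹ • ∑ p, G p)
    -- updates `v_{t+1}` and `x_{t+1}`
    (v' x' : PiLp 2 (fun l : Fin L => EuclideanSpace ℝ (Fin (dl l))))
    (hv' : ∀ l, v' l = v l - (P : ℝ)⁻¹ • ∑ p, topK (kl l) (acc p l))
    (hx' : x' = x - α • Gbar)
    -- layer-wise aggregated Top-k error bound (Assumption 1)
    (htopk : ∀ l : Fin L,
      ‖(∑ p, acc p l) - ∑ p, topK (kl l) (acc p l)‖ ^ 2
        ≤ (1 - (kl l : ℝ) / dl l) * ‖∑ p, acc p l‖ ^ 2) :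
    ‖v' - x'‖ ^ 2 ≤ (1 - 1 / cmax) * ‖α • Gbar + (v - x)‖ ^ 2 := by
  classical
  set A : ∀ l : Fin L, EuclideanSpace ℝ (Fin (dl l)) := fun l => ∑ p, acc p l with hA
  set T : ∀ l : Fin L, EuclideanSpace ℝ (Fin (dl l)) :=
    fun l => ∑ p, topK (kl l) (acc p l) with hT
  have hsum : ∀ (f : Fin P → PiLp 2 (fun l : Fin L => EuclideanSpace ℝ (Fin (dl l))))
      (l : Fin L), (∑ p, f p) l = ∑ p, f p l := fun f l =>
    by rw [WithLp.ofLp_sum]; exact Finset.sum_apply l Finset.univ _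
  have hPpos : (0:ℝ) < (P:ℝ) := by exact_mod_cast hP
  have hdk_le : ∀ l, (dl l : ℝ) / kl l ≤ cmax := by
    intro l
    rw [hcmax]
    exact Finset.le_sup' (fun l => (dl l : ℝ) / kl l) (Finset.mem_univ l)
  have hdk_pos : ∀ l, (0:ℝ) < (dl l : ℝ) / kl l := by
    intro l
    have hk' : (0:ℝ) < kl l := by exact_mod_cast hk l
    have hd' : (0:ℝ) < dl l := lt_of_lt_of_le hk' (by exact_mod_cast hkd l)
    exact div_pos hd' hk'
  have l0 : Fin L := ⟨0, hL⟩
  have hcpos : (0:ℝ) < cmax := lt_of_lt_of_le (hdk_pos l0) (hdk_le l0)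
  have hfrac : ∀ l, 1 - (kl l : ℝ) / dl l ≤ 1 - 1 / cmax := by
    intro l
    have h1 : 1 / cmax ≤ 1 / ((dl l : ℝ) / kl l) :=
      one_div_le_one_div_of_le (hdk_pos l) (hdk_le l)
    have h2 : 1 / ((dl l : ℝ) / kl l) = (kl l : ℝ) / dl l := one_div_div _ _
    linarith [h1, h2.le, h2.ge]
  have hclemax : (0:ℝ) ≤ 1 - 1 / cmax := by
    have h3 := hfrac l0
    have hk' : (0:ℝ) < kl l0 := by exact_mod_cast hk l0
    have hd' : (0:ℝ) < dl l0 := lt_of_lt_of_le hk' (by exact_mod_cast hkd l0)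
    have hkd' : (kl l0 : ℝ) / dl l0 ≤ 1 := by
      rw [div_le_one hd']
      exact_mod_cast hkd l0
    linarith
  have hvxl : ∀ l, (v - x) l = (P : ℝ)⁻¹ • ∑ p, ε p l := by
    intro l
    rw [hvx, PiLp.smul_apply, hsum]
  have hGbarl : ∀ l, Gbar l = (P : ℝ)⁻¹ • ∑ p, G p l := by
    intro l
    rw [hGbar, PiLp.smul_apply, hsum]
  have hAl : ∀ l, A l = (∑ p, ε p l) + α • ∑ p, G p l := by
    intro l
    rw [hA]
    simp only [hacc, PiLp.add_apply, PiLp.smul_apply]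
    rw [Finset.sum_add_distrib, Finset.smul_sum]
  have happ1 : ∀ l, (α • Gbar + (v - x)) l = (P : ℝ)⁻¹ • A l := by
    intro l
    rw [PiLp.add_apply, PiLp.smul_apply, hGbarl, hvxl, hAl, smul_add, smul_comm α,
      add_comm]
  have happ2 : ∀ l, (v' - x') l = (P : ℝ)⁻¹ • (A l - T l) := by
    intro l
    have h2 : x' l = x l - α • Gbar l := by rw [hx', PiLp.sub_apply, PiLp.smul_apply]
    have h4 := happ1 l
    rw [PiLp.add_apply, PiLp.smul_apply, PiLp.sub_apply] at h4
    rw [PiLp.sub_apply, hv', h2, smul_sub, ← h4]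
    abel
  have hLHS : ‖v' - x'‖ ^ 2 = ∑ l, ((P:ℝ)⁻¹)^2 * ‖A l - T l‖ ^ 2 := by
    rw [PiLp.norm_sq_eq_of_L2]
    refine Finset.sum_congr rfl fun l _ => ?_
    rw [happ2, norm_smul, mul_pow]
    congr 1
    rw [Real.norm_eq_abs, abs_of_nonneg (by positivity)]
  have hRHS : ‖α • Gbar + (v - x)‖ ^ 2 = ∑ l, ((P:ℝ)⁻¹)^2 * ‖A l‖ ^ 2 := by
    rw [PiLp.norm_sq_eq_of_L2]
    refine Finset.sum_congr rfl fun l _ => ?_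
    rw [happ1, norm_smul, mul_pow]
    congr 1
    rw [Real.norm_eq_abs, abs_of_nonneg (by positivity)]
  rw [hLHS, hRHS, Finset.mul_sum]
  refine Finset.sum_le_sum fun l _ => ?_
  have h1 : ‖A l - T l‖ ^ 2 ≤ (1 - (kl l : ℝ) / dl l) * ‖A l‖ ^ 2 := htopk l
  have h2 : (1 - (kl l : ℝ) / dl l) * ‖A l‖ ^ 2 ≤ (1 - 1 / cmax) * ‖A l‖ ^ 2 :=
    mul_le_mul_of_nonneg_right (hfrac l) (by positivity)
  calc ((P:ℝ)⁻¹)^2 * ‖A l - T l‖ ^ 2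
      ≤ ((P:ℝ)⁻¹)^2 * ((1 - 1 / cmax) * ‖A l‖ ^ 2) :=
        mul_le_mul_of_nonneg_left (h1.trans h2) (by positivity)
    _ = (1 - 1 / cmax) * (((P:ℝ)⁻¹)^2 * ‖A l‖ ^ 2) := by ring
end

section
/- Let f : ℝ^d → ℝ be differentiable with C-Lipschitz gradient, let x, v ∈ ℝ^d, let α > 0, and let g be a square-integrable random vector in ℝ^d with E[g] = ∇f(v) and E[‖g‖²] ≤ M². Then E[f(x − α g)] ≤ f(x) − (α/2)‖∇f(x)‖² − (α/2)‖∇f(v)‖² + (α C²/2)‖x − v‖² + (α² C M²)/2. -/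
open MeasureTheory

section aux

variable {d : ℕ}

local notation "E" => EuclideanSpace ℝ (Fin d)

lemma gradient_continuous_of_lip (f : E → ℝ) (C : ℝ) (hC : 0 < C)
    (hlip : ∀ a b : E, ‖gradient f a - gradient f b‖ ≤ C * ‖a - b‖) :
    Continuous (gradient f) := by
  have : LipschitzWith C.toNNReal (gradient f) := by
    apply LipschitzWith.of_dist_le_mul
    intro a b
    simpa [dist_eq_norm, Real.coe_toNNReal C hC.le] using hlip a b
  exact this.continuous

/-- Descent lemma for smooth functions. -/
lemma descent_lemma (f : E → ℝ) (C : ℝ) (hC : 0 < C)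
    (hdiff : Differentiable ℝ f)
    (hlip : ∀ a b : E, ‖gradient f a - gradient f b‖ ≤ C * ‖a - b‖)
    (x y : E) :
    f y ≤ f x + inner ℝ (gradient f x) (y - x) + C / 2 * ‖y - x‖ ^ 2 := by
  set u : E := y - x with hu
  have hcont : Continuous (gradient f) := gradient_continuous_of_lip f C hC hlip
  have hline : ∀ t : ℝ, HasDerivAt (fun t : ℝ => x + t • u) u t := fun t => by
    simpa using ((hasDerivAt_id t).smul_const u).const_add x
  have hderiv : ∀ t : ℝ,
      HasDerivAt (fun t : ℝ => f (x + t • u))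
        (inner ℝ (gradient f (x + t • u)) u : ℝ) t := by
    intro t
    have h1 := ((hdiff (x + t • u)).hasGradientAt).hasFDerivAt
    have := h1.comp_hasDerivAt t (hline t)
    exact this
  have hcont2 : Continuous fun t : ℝ => (inner ℝ (gradient f (x + t • u)) u : ℝ) :=
    (hcont.comp (by continuity)).inner continuous_const
  have hFTC : f (x + (1:ℝ) • u) - f (x + (0:ℝ) • u)
      = ∫ t in (0:ℝ)..1, (inner ℝ (gradient f (x + t • u)) u : ℝ) :=
    (intervalIntegral.integral_eq_sub_of_hasDerivAt (fun t _ => hderiv t)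
      (hcont2.intervalIntegrable 0 1)).symm
  have hcont3 : Continuous fun t : ℝ => (inner ℝ (gradient f x) u + C * t * ‖u‖ ^ 2 : ℝ) :=
    continuous_const.add ((continuous_const.mul continuous_id').mul continuous_const)
  have hbound : ∫ t in (0:ℝ)..1, (inner ℝ (gradient f (x + t • u)) u : ℝ)
      ≤ ∫ t in (0:ℝ)..1, (inner ℝ (gradient f x) u + C * t * ‖u‖ ^ 2) := by
    apply intervalIntegral.integral_mono_on zero_le_one
      (hcont2.intervalIntegrable 0 1)
      (hcont3.intervalIntegrable 0 1)
    intro t ht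
    have h1 : (inner ℝ (gradient f (x + t • u)) u : ℝ)
        = inner ℝ (gradient f x) u + inner ℝ (gradient f (x + t • u) - gradient f x) u := by
      rw [inner_sub_left]; ring
    rw [h1]
    have h2 : (inner ℝ (gradient f (x + t • u) - gradient f x) u : ℝ)
        ≤ ‖gradient f (x + t • u) - gradient f x‖ * ‖u‖ :=
      real_inner_le_norm _ _
    have h3 : ‖gradient f (x + t • u) - gradient f x‖ ≤ C * (t * ‖u‖) := by
      have := hlip (x + t • u) x
      simpa [norm_smul, abs_of_nonneg ht.1] using this
    nlinarith [norm_nonneg u, ht.1, mul_le_mul_of_nonneg_right h3 (norm_nonneg u)]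
  have hval : ∫ t in (0:ℝ)..1, (inner ℝ (gradient f x) u + C * t * ‖u‖ ^ 2)
      = inner ℝ (gradient f x) u + C / 2 * ‖u‖ ^ 2 := by
    rw [intervalIntegral.integral_add (Continuous.intervalIntegrable continuous_const 0 1)
      (Continuous.intervalIntegrable (u := fun t : ℝ => C * t * ‖u‖ ^ 2)
        ((continuous_const.mul continuous_id').mul continuous_const) 0 1)]
    have h4 : (fun t : ℝ => C * t * ‖u‖ ^ 2) = fun t : ℝ => (C * ‖u‖ ^ 2) * t := by
      funext t; ring
    rw [h4, intervalIntegral.integral_const_mul, integral_id,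
      intervalIntegral.integral_const]
    simp [smul_eq_mul]
    ring
  have : f y - f x ≤ inner ℝ (gradient f x) u + C / 2 * ‖u‖ ^ 2 := by
    have hy : x + (1:ℝ) • u = y := by simp [hu]
    have hx : x + (0:ℝ) • u = x := by simp
    rw [hy, hx] at hFTC
    rw [hFTC]
    exact hbound.trans (le_of_eq hval)
  linarith

end aux

set_option maxHeartbeats 1000000 in
/-- **Single-step expected descent inequality.**  Let `f : ℝ^d → ℝ` be differentiable
with `C`-Lipschitz gradient, let `x, v ∈ ℝ^d`, `α > 0`, and let `g` be a
square-integrable random vector with `E[g] = ∇f(v)` and `E[‖g‖²] ≤ M²`.  Then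
`E[f(x − α g)] ≤ f(x) − (α/2)‖∇f(x)‖² − (α/2)‖∇f(v)‖² + (α C²/2)‖x − v‖² + α² C M²/2`. -/
theorem expected_descent_step {d : ℕ}
    (f : EuclideanSpace ℝ (Fin d) → ℝ) (C : ℝ) (hC : 0 < C)
    (hdiff : Differentiable ℝ f)
    (hlip : ∀ a b : EuclideanSpace ℝ (Fin d),
      ‖gradient f a - gradient f b‖ ≤ C * ‖a - b‖)
    (x v : EuclideanSpace ℝ (Fin d)) (α : ℝ) (hα : 0 < α)
    {Ω : Type*} [MeasurableSpace Ω] (μ : Measure Ω) [IsProbabilityMeasure μ]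
    (g : Ω → EuclideanSpace ℝ (Fin d))
    (hg2 : MemLp g 2 μ)
    (hmean : ∫ ω, g ω ∂μ = gradient f v)
    (M : ℝ) (hM : ∫ ω, ‖g ω‖ ^ 2 ∂μ ≤ M ^ 2) :
    ∫ ω, f (x - α • g ω) ∂μ
      ≤ f x - (α / 2) * ‖gradient f x‖ ^ 2 - (α / 2) * ‖gradient f v‖ ^ 2
        + (α * C ^ 2 / 2) * ‖x - v‖ ^ 2 + α ^ 2 * C * M ^ 2 / 2 := by
  have hgint : Integrable g μ := hg2.integrable one_le_two
  have hnormint : Integrable (fun ω => ‖g ω‖) μ := hgint.norm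
  have hsqint : Integrable (fun ω => ‖g ω‖ ^ 2) μ := hg2.norm.integrable_sq
  -- pointwise descent bound
  have hpt : ∀ ω, f (x - α • g ω)
      ≤ f x - α * inner ℝ (gradient f x) (g ω) + C * α ^ 2 / 2 * ‖g ω‖ ^ 2 := by
    intro ω
    have := descent_lemma f C hC hdiff hlip x (x - α • g ω)
    have he : x - α • g ω - x = -(α • g ω) := by abel
    rw [he] at this
    have h1 : (inner ℝ (gradient f x) (-(α • g ω)) : ℝ)
        = -(α * inner ℝ (gradient f x) (g ω)) := by
      rw [inner_neg_right, inner_smul_right]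
    have h2 : ‖-(α • g ω)‖ ^ 2 = α ^ 2 * ‖g ω‖ ^ 2 := by
      rw [norm_neg, norm_smul]
      simp [abs_of_nonneg hα.le, mul_pow]
    rw [h1, h2] at this
    linarith
  -- integrability of the composition
  have hmeas : AEStronglyMeasurable (fun ω => f (x - α • g ω)) μ := by
    exact hdiff.continuous.comp_aestronglyMeasurable
      (aestronglyMeasurable_const.sub (hg2.aestronglyMeasurable.const_smul α))
  have hfint : Integrable (fun ω => f (x - α • g ω)) μ := by
    apply Integrable.mono
      (g := fun ω => |f x| + ‖gradient f x‖ * (α * ‖g ω‖) + 3 * C / 2 * (α ^ 2 * ‖g ω‖ ^ 2))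
    · exact ((integrable_const _).add ((hnormint.const_mul α).const_mul _)).add
        ((hsqint.const_mul (α^2)).const_mul _)
    · exact hmeas
    · refine Filter.Eventually.of_forall fun ω => ?_
      have hub := hpt ω
      -- lower bound from descent applied at the shifted point
      have hlb := descent_lemma f C hC hdiff hlip (x - α • g ω) x
      have he : x - (x - α • g ω) = α • g ω := by abel
      rw [he] at hlb
      have hns : ‖α • g ω‖ = α * ‖g ω‖ := by
        rw [norm_smul, Real.norm_eq_abs, abs_of_nonneg hα.le]
      have hcs1 : (inner ℝ (gradient f x) (g ω) : ℝ) ≤ ‖gradient f x‖ * ‖g ω‖ :=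
        real_inner_le_norm _ _
      have hcs1' : -(‖gradient f x‖ * ‖g ω‖) ≤ (inner ℝ (gradient f x) (g ω) : ℝ) := by
        have h5 := real_inner_le_norm (gradient f x) (-(g ω))
        rw [inner_neg_right, norm_neg] at h5
        linarith
      have hcs2 : (inner ℝ (gradient f (x - α • g ω)) (α • g ω) : ℝ)
          ≤ ‖gradient f (x - α • g ω)‖ * ‖α • g ω‖ := real_inner_le_norm _ _
      have hgr : ‖gradient f (x - α • g ω)‖ ≤ ‖gradient f x‖ + C * (α * ‖g ω‖) := by
        have h1 := hlip (x - α • g ω) x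
        have h2 : ‖gradient f (x - α • g ω)‖ - ‖gradient f x‖
            ≤ ‖gradient f (x - α • g ω) - gradient f x‖ := norm_sub_norm_le _ _
        have he2 : x - α • g ω - x = -(α • g ω) := by abel
        rw [he2, norm_neg, hns] at h1
        linarith
      have hBnn : (0:ℝ) ≤ |f x| + ‖gradient f x‖ * (α * ‖g ω‖)
          + 3 * C / 2 * (α ^ 2 * ‖g ω‖ ^ 2) := by positivity
      rw [Real.norm_eq_abs, Real.norm_eq_abs, abs_of_nonneg hBnn, abs_le]
      constructor
      · -- lower bound on f(x - α g)
        rw [hns] at hcs2 hlb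
        have hprod : ‖gradient f (x - α • g ω)‖ * (α * ‖g ω‖)
            ≤ (‖gradient f x‖ + C * (α * ‖g ω‖)) * (α * ‖g ω‖) := by
          apply mul_le_mul_of_nonneg_right hgr
          positivity
        nlinarith [abs_nonneg (f x), le_abs_self (f x), neg_abs_le (f x),
          norm_nonneg (g ω), sq_nonneg (α * ‖g ω‖), hα.le, hC.le]
      · -- upper bound
        nlinarith [le_abs_self (f x), norm_nonneg (g ω), hα.le, hC.le,
          sq_nonneg (α * ‖g ω‖)]
  -- integrable RHS
  have hrhs : Integrable
      (fun ω => f x - α * inner ℝ (gradient f x) (g ω) + C * α ^ 2 / 2 * ‖g ω‖ ^ 2) μ := by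
    exact ((integrable_const _).sub ((hgint.const_inner _).const_mul α)).add
      (hsqint.const_mul _)
  have hint_le : ∫ ω, f (x - α • g ω) ∂μ
      ≤ ∫ ω, (f x - α * inner ℝ (gradient f x) (g ω) + C * α ^ 2 / 2 * ‖g ω‖ ^ 2) ∂μ :=
    integral_mono hfint hrhs hpt
  have hsplit : ∫ ω, (f x - α * inner ℝ (gradient f x) (g ω) + C * α ^ 2 / 2 * ‖g ω‖ ^ 2) ∂μ
      = f x - α * inner ℝ (gradient f x) (gradient f v) + C * α ^ 2 / 2 * ∫ ω, ‖g ω‖ ^ 2 ∂μ := by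
    have e1 : ∫ ω, (f x - α * inner ℝ (gradient f x) (g ω) + C * α ^ 2 / 2 * ‖g ω‖ ^ 2) ∂μ
        = (∫ ω, (f x - α * inner ℝ (gradient f x) (g ω)) ∂μ)
          + ∫ ω, C * α ^ 2 / 2 * ‖g ω‖ ^ 2 ∂μ :=
      integral_add ((integrable_const _).sub ((hgint.const_inner _).const_mul α))
        (hsqint.const_mul _)
    have e2 : ∫ ω, (f x - α * inner ℝ (gradient f x) (g ω)) ∂μ
        = (∫ _ω, f x ∂μ) - ∫ ω, α * inner ℝ (gradient f x) (g ω) ∂μ :=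
      integral_sub (integrable_const _) ((hgint.const_inner _).const_mul α)
    rw [e1, e2, integral_const_mul, integral_const_mul, integral_inner hgint, hmean]
    simp
  have hkey : ∫ ω, f (x - α • g ω) ∂μ
      ≤ f x - α * inner ℝ (gradient f x) (gradient f v) + C * α ^ 2 / 2 * M ^ 2 := by
    rw [hsplit] at hint_le
    have : C * α ^ 2 / 2 * ∫ ω, ‖g ω‖ ^ 2 ∂μ ≤ C * α ^ 2 / 2 * M ^ 2 :=
      mul_le_mul_of_nonneg_left hM (by positivity)
    linarith
  -- algebraic finish
  have hpolar : ‖gradient f x - gradient f v‖ ^ 2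
      = ‖gradient f x‖ ^ 2 - 2 * inner ℝ (gradient f x) (gradient f v)
        + ‖gradient f v‖ ^ 2 := norm_sub_sq_real _ _
  have hlipsq : ‖gradient f x - gradient f v‖ ^ 2 ≤ C ^ 2 * ‖x - v‖ ^ 2 := by
    have := hlip x v
    nlinarith [norm_nonneg (gradient f x - gradient f v), norm_nonneg (x - v)]
  nlinarith [hα.le]
end
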